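/- arXiv:math/9709225 — 2 statements merged into one kernel-verified Lean document; each statement's English description precedes it below -/
import Mathlib

section
/- Suppose α_k, β_k, γ_k ∈ ℂ satisfy α_k β_k γ_k - (α_k + β_k + γ_k) + 2 = 0 and γ_k → ∞. Then α_k → ∞ if and only if β_k → 0, and α_k → 1 if and only if β_k → 1. -/
open Filter

private lemma keyA (α β γ : ℕ → ℂ)
    (hrel : ∀ k, α k * β k * γ k - (α k + β k + γ k) + 2 = 0)
    (hα : Tendsto (fun k => ‖α k‖) atTop atTop)
    (hγ : Tendsto (fun k => ‖γ k‖) atTop atTop) :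
    Tendsto β atTop (nhds 0) := by
  rw [NormedAddCommGroup.tendsto_nhds_zero]
  intro ε hε
  set M : ℝ := max (12 / ε) 2 with hM
  have hM2 : (2:ℝ) ≤ M := le_max_right _ _
  have hMε : 12 / ε ≤ M := le_max_left _ _
  have hMε' : (12:ℝ) ≤ ε * M := by
    rw [div_le_iff₀ hε] at hMε; linarith [hMε]
  filter_upwards [hα.eventually_ge_atTop M, hγ.eventually_ge_atTop M] with k ha hc
  have h1 : β k * (α k * γ k - 1) = α k + γ k - 2 := by
    linear_combination hrel k
  have h2 : ‖β k‖ * ‖α k * γ k - 1‖ = ‖α k + γ k - 2‖ := by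
    rw [← norm_mul, h1]
  have hn : ‖α k‖ = ‖α k‖ := rfl
  have hn' : ‖γ k‖ = ‖γ k‖ := rfl
  rw [hn] at ha; rw [hn'] at hc
  set a := ‖α k‖
  set c := ‖γ k‖
  have hlow : a * c - 1 ≤ ‖α k * γ k - 1‖ := by
    have := norm_sub_norm_le (α k * γ k) (1 : ℂ)
    simpa [norm_mul] using this
  have hup : ‖α k + γ k - 2‖ ≤ a + c + 2 := by
    calc ‖α k + γ k - 2‖ ≤ ‖α k + γ k‖ + ‖(2:ℂ)‖ := norm_sub_le _ _
      _ ≤ a + c + 2 := by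
        have := norm_add_le (α k) (γ k)
        simp only [Complex.norm_ofNat]
        linarith
  have hb : (0:ℝ) ≤ ‖β k‖ := norm_nonneg _
  have hac : (3:ℝ) ≤ a * c - 1 := by nlinarith
  have key : ‖β k‖ * (a * c - 1) ≤ a + c + 2 := by
    calc ‖β k‖ * (a * c - 1) ≤ ‖β k‖ * ‖α k * γ k - 1‖ :=
          mul_le_mul_of_nonneg_left hlow hb
      _ = ‖α k + γ k - 2‖ := h2
      _ ≤ a + c + 2 := hup
  -- show a + c + 2 < ε * (a*c - 1)
  have hfin : a + c + 2 < ε * (a * c - 1) := by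
    nlinarith [mul_le_mul_of_nonneg_left hc (le_trans (by norm_num) (mul_nonneg hε.le (by linarith : (0:ℝ) ≤ a))),
      mul_le_mul_of_nonneg_right ha (by linarith : (0:ℝ) ≤ c),
      mul_le_mul_of_nonneg_right hMε' (by linarith : (0:ℝ) ≤ a),
      mul_le_mul_of_nonneg_right hMε' (by linarith : (0:ℝ) ≤ c),
      mul_le_mul_of_nonneg_left hc (mul_nonneg hε.le (by linarith : (0:ℝ) ≤ a))]
  have : ‖β k‖ * (a * c - 1) < ε * (a * c - 1) := lt_of_le_of_lt key hfin
  exact lt_of_mul_lt_mul_right this (by linarith)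

private lemma keyB (α β γ : ℕ → ℂ)
    (hrel : ∀ k, α k * β k * γ k - (α k + β k + γ k) + 2 = 0)
    (hβ : Tendsto β atTop (nhds 0))
    (hγ : Tendsto (fun k => ‖γ k‖) atTop atTop) :
    Tendsto (fun k => ‖α k‖) atTop atTop := by
  rw [tendsto_atTop]
  intro b
  set B : ℝ := max b 0 with hB
  have hB0 : (0:ℝ) ≤ B := le_max_right _ _
  have hβ' : ∀ᶠ k in atTop, ‖β k‖ < 1 / (2 * (B + 1)) := by
    rw [NormedAddCommGroup.tendsto_nhds_zero] at hβ
    exact hβ _ (by positivity)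
  filter_upwards [hβ', hγ.eventually_ge_atTop (2 * B + 8)] with k hb hc
  have hn : ‖α k‖ = ‖α k‖ := rfl
  have hn' : ‖γ k‖ = ‖γ k‖ := rfl
  rw [hn'] at hc; rw [hn]
  by_contra hcon
  push_neg at hcon
  have hαB : ‖α k‖ < B := lt_of_lt_of_le hcon (le_max_left _ _)
  have h1 : γ k * (α k * β k - 1) = α k + β k - 2 := by
    linear_combination hrel k
  have h2 : ‖γ k‖ * ‖α k * β k - 1‖ = ‖α k + β k - 2‖ := by
    rw [← norm_mul, h1]
  have hβhalf : ‖β k‖ < 1 / (2 * (B + 1)) := hb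
  have hβ1 : ‖β k‖ ≤ 1 := by
    have : 1 / (2 * (B + 1)) ≤ 1 := by
      rw [div_le_one (by positivity)]; linarith
    linarith
  have hlow : 1 - ‖α k‖ * ‖β k‖ ≤ ‖α k * β k - 1‖ := by
    have h := norm_sub_norm_le (1 : ℂ) (α k * β k)
    rw [norm_sub_rev] at h
    simpa [norm_mul] using h
  have hprod : ‖α k‖ * ‖β k‖ ≤ 1 / 2 := by
    have h1 : ‖α k‖ * ‖β k‖ ≤ B * (1 / (2 * (B + 1))) := by
      apply mul_le_mul hαB.le hβhalf.le (norm_nonneg _) hB0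
    have h2 : B * (1 / (2 * (B + 1))) ≤ 1 / 2 := by
      rw [mul_one_div, div_le_div_iff₀ (by positivity) (by norm_num)]
      linarith
    linarith
  have hup : ‖α k + β k - 2‖ ≤ B + 3 := by
    calc ‖α k + β k - 2‖ ≤ ‖α k + β k‖ + ‖(2:ℂ)‖ := norm_sub_le _ _
      _ ≤ ‖α k‖ + ‖β k‖ + 2 := by
        have := norm_add_le (α k) (β k)
        simp only [Complex.norm_ofNat]
        linarith
      _ ≤ B + 3 := by linarith
  have hD : (1:ℝ)/2 ≤ ‖α k * β k - 1‖ := by linarith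
  have : ‖γ k‖ * (1/2) ≤ B + 3 := by
    calc ‖γ k‖ * (1/2) ≤ ‖γ k‖ * ‖α k * β k - 1‖ :=
        mul_le_mul_of_nonneg_left hD (norm_nonneg _)
      _ = ‖α k + β k - 2‖ := h2
      _ ≤ B + 3 := hup
  linarith

private lemma keyC (α β γ : ℕ → ℂ)
    (hrel : ∀ k, α k * β k * γ k - (α k + β k + γ k) + 2 = 0)
    (hα : Tendsto α atTop (nhds 1))
    (hγ : Tendsto (fun k => ‖γ k‖) atTop atTop) :
    Tendsto β atTop (nhds 1) := by
  rw [← tendsto_sub_nhds_zero_iff, NormedAddCommGroup.tendsto_nhds_zero]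
  intro ε hε
  have hα' : ∀ᶠ k in atTop, ‖α k - 1‖ < min (ε / 3) (1 / 2) := by
    have := (tendsto_sub_nhds_zero_iff.mpr hα)
    rw [NormedAddCommGroup.tendsto_nhds_zero] at this
    exact this _ (by positivity)
  filter_upwards [hα', hγ.eventually_ge_atTop 8] with k hd hc
  have hn' : ‖γ k‖ = ‖γ k‖ := rfl
  rw [hn'] at hc
  set d := ‖α k - 1‖ with hdd
  have hd1 : d < ε / 3 := lt_of_lt_of_le hd (min_le_left _ _)
  have hd2 : d < 1 / 2 := lt_of_lt_of_le hd (min_le_right _ _)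
  have hd0 : (0:ℝ) ≤ d := norm_nonneg _
  have hid : (β k - 1) * (α k * γ k - 1) = (α k - 1) * (1 - γ k) := by
    linear_combination hrel k
  have h2 : ‖β k - 1‖ * ‖α k * γ k - 1‖ = d * ‖1 - γ k‖ := by
    rw [← norm_mul, ← norm_mul, hid]
  have hαlow : (1:ℝ) - d ≤ ‖α k‖ := by
    have h : ‖(1:ℂ)‖ - ‖α k‖ ≤ ‖α k - 1‖ := by
      rw [norm_sub_rev]; exact norm_sub_norm_le _ _
    simp only [norm_one] at h
    linarith
  have hDlow : ‖α k‖ * ‖γ k‖ - 1 ≤ ‖α k * γ k - 1‖ := by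
    have := norm_sub_norm_le (α k * γ k) (1 : ℂ)
    simpa [norm_mul] using this
  have hD : (1:ℝ)/2 * ‖γ k‖ - 1 ≤ ‖α k * γ k - 1‖ := by
    have : (1:ℝ)/2 * ‖γ k‖ ≤ ‖α k‖ * ‖γ k‖ := by
      apply mul_le_mul_of_nonneg_right (by linarith) (norm_nonneg _)
    linarith
  have hDpos : (3:ℝ) ≤ ‖α k * γ k - 1‖ := by linarith
  have hN : ‖1 - γ k‖ ≤ ‖γ k‖ + 1 := by
    calc ‖1 - γ k‖ ≤ ‖(1:ℂ)‖ + ‖γ k‖ := norm_sub_le _ _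
      _ = ‖γ k‖ + 1 := by simp [add_comm]
  -- (c+1) ≤ 3*(c/2 - 1) since c ≥ 8
  have hratio : ‖1 - γ k‖ ≤ 3 * ‖α k * γ k - 1‖ := by
    have : ‖γ k‖ + 1 ≤ 3 * (1/2 * ‖γ k‖ - 1) := by linarith
    linarith
  have hkey : ‖β k - 1‖ * ‖α k * γ k - 1‖ ≤ 3 * d * ‖α k * γ k - 1‖ := by
    rw [h2]
    calc d * ‖1 - γ k‖ ≤ d * (3 * ‖α k * γ k - 1‖) :=
        mul_le_mul_of_nonneg_left hratio hd0
      _ = 3 * d * ‖α k * γ k - 1‖ := by ring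
  have hle : ‖β k - 1‖ ≤ 3 * d :=
    le_of_mul_le_mul_right hkey (by linarith)
  linarith

/-- If `α_k β_k γ_k - (α_k+β_k+γ_k) + 2 = 0` and `γ_k → ∞`, then `α_k → ∞` iff
`β_k → 0`, and `α_k → 1` iff `β_k → 1`. -/
theorem stmt_15 (α β γ : ℕ → ℂ)
    (hrel : ∀ k, α k * β k * γ k - (α k + β k + γ k) + 2 = 0)
    (hγ : Filter.Tendsto (fun k => ‖γ k‖) Filter.atTop Filter.atTop) :
    (Filter.Tendsto (fun k => ‖α k‖) Filter.atTop Filter.atTop ↔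
      Filter.Tendsto β Filter.atTop (nhds 0)) ∧
    (Filter.Tendsto α Filter.atTop (nhds 1) ↔
      Filter.Tendsto β Filter.atTop (nhds 1)) := by
  have hrel' : ∀ k, β k * α k * γ k - (β k + α k + γ k) + 2 = 0 := fun k => by
    linear_combination hrel k
  refine ⟨⟨fun h => keyA α β γ hrel h hγ, fun h => keyB α β γ hrel h hγ⟩,
    ⟨fun h => keyC α β γ hrel h hγ, fun h => keyC β α γ hrel' h hγ⟩⟩
end

section
/- Substituting ρ = -3 into the line ρW - 2X - Y (defining Per_2(-3)) gives -3W - 2X - Y, and this linear form divides the polynomial defining Per_3(1), namely W³ - [WX(2X+Y) + 3W²X + 2W³] + (X+Y)²(2X+Y) - WX(X+2Y) + 12W²X + 28W³. -/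
/-- The linear form `-3W - 2X - Y` defining `Per_2(-3)` divides the homogeneous cubic
defining `Per_3(1)`. -/
theorem stmt_19 (W X Y : MvPolynomial (Fin 3) ℂ)
    (hW : W = MvPolynomial.X 0) (hX : X = MvPolynomial.X 1) (hY : Y = MvPolynomial.X 2) :
    (-3 * W - 2 * X - Y) ∣
      (W ^ 3 - (W * X * (2 * X + Y) + 3 * W ^ 2 * X + 2 * W ^ 3) +
        (X + Y) ^ 2 * (2 * X + Y) - W * X * (X + 2 * Y) + 12 * W ^ 2 * X + 28 * W ^ 3) := by
  exact ⟨-9 * W ^ 2 + 3 * W * X + 3 * W * Y - X ^ 2 - 2 * X * Y - Y ^ 2, by ring⟩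
end
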